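/- For every integer m ≥ 1, the family of 2^m affine-linear forms in the m+1 variables (x, v₁,…,v_m) given by (x, v₁,…,v_m) ↦ x + ω·v̄ for ω ∈ {0,1}^m (where ω·v̄ = Σᵢ ωᵢvᵢ), i.e. the system of forms corresponding to the vertices of the m-dimensional cube (x|v₁,…,v_m), has CS complexity ≤ m. -/

import Mathlib

section Defs

/-- The family of (affine-)linear forms, identified with their coefficient vectors in `ℚ^ι`,
has CS complexity `≤ d` at the index `j`: the remaining indices can be partitioned into `d`
classes so that the coefficient vector of the `j`-th form does not lie in the affine span of
the coefficient vectors of any single class. -/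
def CSAt {I ι : Type*} (L : I → (ι → ℚ)) (d : ℕ) (j : I) : Prop :=
  ∃ c : I → Fin d, ∀ t : Fin d,
    L j ∉ affineSpan ℚ (L '' {i | i ≠ j ∧ c i = t})

/-- The family of forms has CS complexity `≤ d`: it has CS complexity `≤ d` at every index. -/
def CSBounded {I ι : Type*} (L : I → (ι → ℚ)) (d : ℕ) : Prop :=
  ∀ j : I, CSAt L d j

/-- The `2^m` vertex forms `(x, v₁, …, v_m) ↦ x + ω·v̄` of the cube `(x|v₁,…,v_m)`,
identified with their coefficient vectors; the vertex is indexed by `ω ⊆ {1,…,m}`,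
the variable `x` by `Sum.inl ()` and the variable `vᵢ` by `Sum.inr i`. -/
def cubeForms (m : ℕ) : Finset (Fin m) → (Unit ⊕ Fin m → ℚ) := fun ω =>
  Sum.elim (fun _ => 1) (fun i => if i ∈ ω then 1 else 0)

end Defs

/-- For every `m ≥ 1`, the system of `2^m` linear forms in `(x, v₁,…,v_m)`
corresponding to the vertices `x + ω·v̄`, `ω ∈ {0,1}^m`, of the `m`-dimensional cube
`(x|v₁,…,v_m)` has CS complexity `≤ m`. -/
theorem stmt7 (m : ℕ) (hm : 1 ≤ m) : CSBounded (cubeForms m) m := by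
  intro j
  refine ⟨fun ω => if h : (symmDiff ω j).Nonempty then (symmDiff ω j).min' h else ⟨0, hm⟩, fun t => ?_⟩
  -- evaluation affine map at coordinate Sum.inr t
  set g : ((Unit ⊕ Fin m) → ℚ) →ᵃ[ℚ] ℚ :=
    (LinearMap.proj (Sum.inr t) : ((Unit ⊕ Fin m) → ℚ) →ₗ[ℚ] ℚ).toAffineMap with hg
  set a : ℚ := 1 - cubeForms m j (Sum.inr t) with ha
  intro hmem
  have hsub : cubeForms m '' {i | i ≠ j ∧ (if h : (symmDiff i j).Nonempty then (symmDiff i j).min' h else ⟨0, hm⟩) = t}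
      ⊆ (AffineSubspace.comap g (affineSpan ℚ ({a} : Set ℚ)) : Set _) := by
    rintro _ ⟨ω, ⟨hne, hc⟩, rfl⟩
    have hnonempty : (symmDiff ω j).Nonempty := by
      rw [Finset.nonempty_iff_ne_empty]
      intro h
      exact hne (by simpa [symmDiff_eq_bot] using h)
    rw [dif_pos hnonempty] at hc
    have ht : t ∈ symmDiff ω j := hc ▸ (symmDiff ω j).min'_mem hnonempty
    have ht' : (t ∈ ω ∧ t ∉ j) ∨ (t ∈ j ∧ t ∉ ω) := by
      simpa [Finset.mem_symmDiff] using ht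
    have : g (cubeForms m ω) = a := by
      simp only [hg, ha, LinearMap.coe_toAffineMap, LinearMap.proj_apply, cubeForms,
        Sum.elim_inr]
      rcases ht' with ⟨h1, h2⟩ | ⟨h1, h2⟩ <;> simp [h1, h2]
    simp only [AffineSubspace.mem_coe, AffineSubspace.mem_comap, this,
      AffineSubspace.mem_affineSpan_singleton]
  have := (affineSpan_le.mpr hsub) hmem
  rw [AffineSubspace.mem_comap, AffineSubspace.mem_affineSpan_singleton] at this
  have hgj : g (cubeForms m j) = cubeForms m j (Sum.inr t) := rfl
  rw [hgj, ha] at this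
  by_cases h : t ∈ j <;> simp [cubeForms, h] at this
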